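/- Let β ∈ (1/2, 1], let D and C_β be 2×2 matrices with positive entries, let N : ℝ² → ℝ² have components Nᵢ(x) = (1/2)Σ_{j,k} b^i_{jk} x_j x_k with nonnegative coefficients, and let Γ_β > 0. Then there exists Λ > 0 such that in the domain K = {(θ, λ) : 0 < θ ≤ Λ, 0 < λ ≤ 1} the system H(θ, λ) = C_β (1, λ θ^{1−β})^† − Γ_β θ^{2β−1} ∫₀¹ D N(H(θ(1−y), λ)) (1−y)^{2β−2} d(y^β) has a unique solution in the class of functions with nonnegative continuous components. -/

import Mathlib

open Filter Set intervalIntegral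

/-- The quadratic map `N` with components `Nᵢ(x) = (1/2)Σ_{j,k} b^i_{jk} x_j x_k`. -/
noncomputable def quadMap (b : Fin 2 → Fin 2 → Fin 2 → ℝ) (x : Fin 2 → ℝ) : Fin 2 → ℝ :=
  fun i => (1 / 2) * ∑ j, ∑ k, b i j k * x j * x k

namespace LFS
open MeasureTheory

open MeasureTheory

noncomputable def g (β y : ℝ) : ℝ := β * y ^ (β - 1) * (1 - y) ^ (2 * β - 2)

lemma g_nonneg {β : ℝ} (hβ0 : 0 ≤ β) {y : ℝ} (hy : 0 ≤ y) (hy1 : y ≤ 1) : 0 ≤ g β y :=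
  mul_nonneg (mul_nonneg hβ0 (Real.rpow_nonneg hy _)) (Real.rpow_nonneg (by linarith) _)

lemma g_contOn {β : ℝ} : ContinuousOn (g β) (Set.Ioo 0 1) := by
  apply ContinuousOn.mul
  · exact continuousOn_const.mul (continuousOn_id.rpow_const fun x hx => Or.inl (ne_of_gt hx.1))
  · exact (continuousOn_const.sub continuousOn_id).rpow_const
      fun x hx => Or.inl (by intro h; simp only [Pi.sub_apply, id] at h; nlinarith [hx.2])

lemma g_intble {β : ℝ} (h2 : 1/2 < β) (h1 : β ≤ 1) : IntervalIntegrable (g β) volume 0 1 := by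
  have p1 : IntervalIntegrable (g β) volume 0 (1/2) := by
    have h1' : IntervalIntegrable (fun y : ℝ => y ^ (β - 1)) volume 0 (1/2) :=
      intervalIntegrable_rpow' (by linarith)
    have h2' : ContinuousOn (fun y : ℝ => β * (1 - y) ^ (2 * β - 2)) (Set.uIcc 0 (1/2)) := by
      apply continuousOn_const.mul
      apply (continuousOn_const.sub continuousOn_id).rpow_const
      intro x hx
      rw [Set.uIcc_of_le (by norm_num)] at hx
      exact Or.inl (by intro h; have := hx.2; norm_num at h ⊢; linarith)
    have := h1'.mul_continuousOn h2'
    have heq : (fun y : ℝ => y ^ (β - 1) * (β * (1 - y) ^ (2 * β - 2))) = g β := by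
      funext y; simp only [g]; ring
    rwa [heq] at this
  have p2 : IntervalIntegrable (g β) volume (1/2) 1 := by
    have h3 : IntervalIntegrable (fun y : ℝ => (1 - y) ^ (2 * β - 2)) volume (1/2) 1 := by
      have base : IntervalIntegrable (fun x : ℝ => x ^ (2 * β - 2)) volume 0 (1/2) :=
        intervalIntegrable_rpow' (by linarith)
      have := (base.comp_sub_left 1).symm
      norm_num at this
      exact this
    have h4 : ContinuousOn (fun y : ℝ => β * y ^ (β - 1)) (Set.uIcc (1/2) 1) := by
      apply continuousOn_const.mul
      apply continuousOn_id.rpow_const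
      intro x hx
      rw [Set.uIcc_of_le (by norm_num)] at hx
      exact Or.inl (by simp only [id]; intro h; have := hx.1; norm_num at h ⊢; linarith)
    have := h3.continuousOn_mul h4
    have heq : (fun y : ℝ => β * y ^ (β - 1) * (1 - y) ^ (2 * β - 2)) = g β := rfl
    exact this
  exact p1.trans p2

lemma g_aesm {β : ℝ} : AEStronglyMeasurable (g β) (volume.restrict (Set.Ioc 0 1)) := by
  have h0 : AEStronglyMeasurable (g β) (volume.restrict (Set.Ioo 0 1)) :=
    ContinuousOn.aestronglyMeasurable g_contOn measurableSet_Ioo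
  rwa [Measure.restrict_congr_set Ioo_ae_eq_Ioc] at h0

noncomputable def IG (β : ℝ) : ℝ := ∫ y in (0:ℝ)..1, g β y

lemma IG_nonneg {β : ℝ} (hβ0 : 0 ≤ β) : 0 ≤ IG β :=
  intervalIntegral.integral_nonneg (by norm_num) fun y hy => g_nonneg hβ0 hy.1 hy.2

lemma ae_ne_one : ∀ᵐ y : ℝ ∂volume, y ≠ 1 := by
  have h0 : ∀ᵐ y : ℝ ∂volume, y ∉ ({1} : Set ℝ) :=
    measure_eq_zero_iff_ae_notMem.mp (measure_singleton 1)
  filter_upwards [h0] with y hy using by simpa using hy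

lemma core_int {β B : ℝ} (h2 : 1/2 < β) (h1 : β ≤ 1) {h : ℝ → ℝ}
    (hm : AEStronglyMeasurable h (volume.restrict (Set.Ioc 0 1)))
    (hbd : ∀ y ∈ Set.Ico (0:ℝ) 1, |h y| ≤ B) :
    IntervalIntegrable (fun y => g β y * h y) volume 0 1 := by
  rw [intervalIntegrable_iff_integrableOn_Ioc_of_le (by norm_num)]
  have hgB : IntegrableOn (fun y => g β y * B) (Set.Ioc 0 1) volume := by
    have := (g_intble h2 h1).mul_const B
    rwa [intervalIntegrable_iff_integrableOn_Ioc_of_le (by norm_num)] at this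
  apply Integrable.mono' hgB (g_aesm.mul hm)
  refine ((ae_restrict_iff' measurableSet_Ioc).mpr ?_)
  filter_upwards [ae_ne_one] with y hy1 hy
  have hyIco : y ∈ Set.Ico (0:ℝ) 1 := ⟨le_of_lt hy.1, lt_of_le_of_ne hy.2 hy1⟩
  have hg0 : 0 ≤ g β y := g_nonneg (by linarith) hyIco.1 hy.2
  have := hbd y hyIco
  simp only [Pi.mul_apply]
  rw [Real.norm_eq_abs, abs_mul, abs_of_nonneg hg0]
  exact mul_le_mul_of_nonneg_left this hg0

lemma core_bound {β B : ℝ} (h2 : 1/2 < β) (h1 : β ≤ 1) {h : ℝ → ℝ}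
    (hint : IntervalIntegrable (fun y => g β y * h y) volume 0 1)
    (hbd : ∀ y ∈ Set.Ico (0:ℝ) 1, |h y| ≤ B) :
    |∫ y in (0:ℝ)..1, g β y * h y| ≤ IG β * B := by
  have habs : IntervalIntegrable (fun y => |g β y * h y|) volume 0 1 := by
    simpa only [Real.norm_eq_abs] using hint.norm
  have hgB : IntervalIntegrable (fun y => g β y * B) volume 0 1 := (g_intble h2 h1).mul_const B
  calc |∫ y in (0:ℝ)..1, g β y * h y| ≤ ∫ y in (0:ℝ)..1, |g β y * h y| :=
        intervalIntegral.abs_integral_le_integral_abs (by norm_num)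
    _ ≤ ∫ y in (0:ℝ)..1, g β y * B := by
        apply intervalIntegral.integral_mono_ae_restrict (by norm_num) habs hgB
        refine ((ae_restrict_iff' measurableSet_Icc).mpr ?_)
        filter_upwards [ae_ne_one] with y hy1 hy
        have hyIco : y ∈ Set.Ico (0:ℝ) 1 := ⟨hy.1, lt_of_le_of_ne hy.2 hy1⟩
        have hg0 : 0 ≤ g β y := g_nonneg (by linarith) hy.1 hy.2
        rw [abs_mul, abs_of_nonneg hg0]
        exact mul_le_mul_of_nonneg_left (hbd y hyIco) hg0
    _ = IG β * B := by rw [IG, ← intervalIntegral.integral_mul_const]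

lemma core_nonneg {β : ℝ} (h2 : 1/2 < β) {h : ℝ → ℝ}
    (hbd : ∀ y ∈ Set.Ico (0:ℝ) 1, 0 ≤ h y) :
    0 ≤ ∫ y in (0:ℝ)..1, g β y * h y := by
  apply intervalIntegral.integral_nonneg_of_ae_restrict (by norm_num : (0:ℝ) ≤ 1)
  refine ((ae_restrict_iff' measurableSet_Icc).mpr ?_)
  filter_upwards [ae_ne_one] with y hy1 hy
  have hyIco : y ∈ Set.Ico (0:ℝ) 1 := ⟨hy.1, lt_of_le_of_ne hy.2 hy1⟩
  exact mul_nonneg (g_nonneg (by linarith) hy.1 hy.2) (hbd y hyIco)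



lemma quad_expand (b : Fin 2 → Fin 2 → Fin 2 → ℝ) (x : Fin 2 → ℝ) (i : Fin 2) :
    quadMap b x i = (1/2) * (b i 0 0 * x 0 * x 0 + b i 0 1 * x 0 * x 1
      + b i 1 0 * x 1 * x 0 + b i 1 1 * x 1 * x 1) := by
  simp [quadMap, Fin.sum_univ_two]; ring

lemma quad_cont (b : Fin 2 → Fin 2 → Fin 2 → ℝ) (i : Fin 2) :
    Continuous fun x : Fin 2 → ℝ => quadMap b x i := by
  unfold quadMap; fun_prop

lemma quad_nonneg {b : Fin 2 → Fin 2 → Fin 2 → ℝ} (hb : ∀ i j k, 0 ≤ b i j k)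
    {x : Fin 2 → ℝ} (hx : ∀ j, 0 ≤ x j) (i : Fin 2) : 0 ≤ quadMap b x i := by
  rw [quad_expand]
  have h00 := mul_nonneg (mul_nonneg (hb i 0 0) (hx 0)) (hx 0)
  have h01 := mul_nonneg (mul_nonneg (hb i 0 1) (hx 0)) (hx 1)
  have h10 := mul_nonneg (mul_nonneg (hb i 1 0) (hx 1)) (hx 0)
  have h11 := mul_nonneg (mul_nonneg (hb i 1 1) (hx 1)) (hx 1)
  linarith

lemma quad_le {b : Fin 2 → Fin 2 → Fin 2 → ℝ} (hb : ∀ i j k, 0 ≤ b i j k)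
    {x : Fin 2 → ℝ} {M : ℝ} (hx : ∀ j, 0 ≤ x j) (hxM : ∀ j, x j ≤ M) (i : Fin 2) :
    quadMap b x i ≤ (1/2) * (b i 0 0 + b i 0 1 + b i 1 0 + b i 1 1) * M^2 := by
  rw [quad_expand]
  have hM : 0 ≤ M := le_trans (hx 0) (hxM 0)
  have key : ∀ j k : Fin 2, b i j k * x j * x k ≤ b i j k * M^2 := by
    intro j k
    have : x j * x k ≤ M^2 := by nlinarith [hx j, hx k, hxM j, hxM k]
    calc b i j k * x j * x k = b i j k * (x j * x k) := by ring
      _ ≤ b i j k * M^2 := mul_le_mul_of_nonneg_left this (hb i j k)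
  have := key 0 0; have := key 0 1; have := key 1 0; have := key 1 1
  linarith

lemma prod_diff_bound {a c e f M d : ℝ} (ha : 0 ≤ a) (haM : a ≤ M)
    (hf : 0 ≤ f) (hfM : f ≤ M) (h1 : |a - e| ≤ d) (h2 : |c - f| ≤ d) :
    |a * c - e * f| ≤ 2 * M * d := by
  have key : a * c - e * f = a * (c - f) + (a - e) * f := by ring
  rw [key]
  calc |a * (c - f) + (a - e) * f| ≤ |a * (c - f)| + |(a - e) * f| := abs_add_le _ _
    _ ≤ M * d + d * M := by
        rw [abs_mul, abs_mul]
        have := abs_nonneg (c - f); have := abs_nonneg (a - e)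
        have ha' : |a| ≤ M := by rw [abs_of_nonneg ha]; exact haM
        have hf' : |f| ≤ M := by rw [abs_of_nonneg hf]; exact hfM
        have hM : 0 ≤ M := le_trans ha haM
        exact add_le_add (mul_le_mul ha' h2 (abs_nonneg _) hM)
          (mul_le_mul h1 hf' (abs_nonneg _) (le_trans (abs_nonneg _) h1))
    _ = 2 * M * d := by ring

lemma quad_lip {b : Fin 2 → Fin 2 → Fin 2 → ℝ} (hb : ∀ i j k, 0 ≤ b i j k)
    {x z : Fin 2 → ℝ} {M d : ℝ} (hx : ∀ j, 0 ≤ x j) (hxM : ∀ j, x j ≤ M)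
    (hz : ∀ j, 0 ≤ z j) (hzM : ∀ j, z j ≤ M) (hd : ∀ j, |x j - z j| ≤ d) (i : Fin 2) :
    |quadMap b x i - quadMap b z i| ≤ (b i 0 0 + b i 0 1 + b i 1 0 + b i 1 1) * M * d := by
  rw [quad_expand, quad_expand]
  have key : ∀ j k : Fin 2, |b i j k * x j * x k - b i j k * z j * z k|
      ≤ b i j k * (2 * M * d) := by
    intro j k
    have h := prod_diff_bound (hx j) (hxM j) (hz k) (hzM k) (hd j) (hd k)
    calc |b i j k * x j * x k - b i j k * z j * z k|
        = |b i j k| * |x j * x k - z j * z k| := by rw [← abs_mul]; ring_nf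
      _ ≤ b i j k * (2 * M * d) := by
          rw [abs_of_nonneg (hb i j k)]
          exact mul_le_mul_of_nonneg_left h (hb i j k)
  have h00 := abs_le.mp (key 0 0); have h01 := abs_le.mp (key 0 1)
  have h10 := abs_le.mp (key 1 0); have h11 := abs_le.mp (key 1 1)
  rw [abs_le]; constructor <;> [skip; skip] <;> nlinarith [h00.1, h00.2, h01.1, h01.2, h10.1, h10.2, h11.1, h11.2]

lemma mulVec_expand (A : Matrix (Fin 2) (Fin 2) ℝ) (v : Fin 2 → ℝ) (i : Fin 2) :
    A.mulVec v i = A i 0 * v 0 + A i 1 * v 1 := by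
  simp [Matrix.mulVec, dotProduct, Fin.sum_univ_two]

noncomputable def cl (a x : ℝ) : ℝ := max 0 (min x a)

lemma cl_nonneg (a x : ℝ) : 0 ≤ cl a x := le_max_left _ _
lemma cl_le {a : ℝ} (ha : 0 ≤ a) (x : ℝ) : cl a x ≤ a := max_le ha (min_le_right _ _)
lemma cl_eq {a x : ℝ} (h0 : 0 ≤ x) (h1 : x ≤ a) : cl a x = x := by
  rw [cl, min_eq_left h1, max_eq_right h0]
lemma cl_cont (a : ℝ) : Continuous (cl a) :=
  continuous_const.max (continuous_id.min continuous_const)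
lemma cl_lip (a x y : ℝ) : |cl a x - cl a y| ≤ |x - y| := by
  have h1 : |max 0 (min x a) - max 0 (min y a)| ≤ |min x a - min y a| := by
    rw [max_comm 0 (min x a), max_comm 0 (min y a)]
    exact abs_max_sub_max_le_abs _ _ _
  have h2 : |min x a - min y a| ≤ max |x - y| |a - a| := abs_min_sub_min_le_max _ _ _ _
  simp only [sub_self, abs_zero] at h2
  rw [max_eq_left (abs_nonneg _)] at h2
  exact le_trans h1 h2

noncomputable def Sb (b : Fin 2 → Fin 2 → Fin 2 → ℝ) : ℝ :=
  b 0 0 0 + b 0 0 1 + b 0 1 0 + b 0 1 1 + b 1 0 0 + b 1 0 1 + b 1 1 0 + b 1 1 1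

lemma Sb_i_le {b : Fin 2 → Fin 2 → Fin 2 → ℝ} (hb : ∀ i j k, 0 ≤ b i j k) (i : Fin 2) :
    b i 0 0 + b i 0 1 + b i 1 0 + b i 1 1 ≤ Sb b := by
  have h0 := hb 0 0 0; have h1 := hb 0 0 1; have h2 := hb 0 1 0; have h3 := hb 0 1 1
  have h4 := hb 1 0 0; have h5 := hb 1 0 1; have h6 := hb 1 1 0; have h7 := hb 1 1 1
  fin_cases i <;> simp only [Sb, Fin.zero_eta, Fin.mk_one] <;> linarith

lemma Sb_nonneg {b : Fin 2 → Fin 2 → Fin 2 → ℝ} (hb : ∀ i j k, 0 ≤ b i j k) : 0 ≤ Sb b := by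
  have h0 := hb 0 0 0; have h1 := hb 0 0 1; have h2 := hb 0 1 0; have h3 := hb 0 1 1
  have h4 := hb 1 0 0; have h5 := hb 1 0 1; have h6 := hb 1 1 0; have h7 := hb 1 1 1
  simp only [Sb]; linarith

lemma DN_bound {D : Matrix (Fin 2) (Fin 2) ℝ} {b : Fin 2 → Fin 2 → Fin 2 → ℝ}
    (hb : ∀ i j k, 0 ≤ b i j k) {Mb : ℝ} (hMb : 0 ≤ Mb) {x : Fin 2 → ℝ}
    (hx : ∀ j, 0 ≤ x j) (hxM : ∀ j, x j ≤ Mb) (i : Fin 2) :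
    |D.mulVec (quadMap b x) i| ≤ (|D i 0| + |D i 1|) * ((1/2) * Sb b * Mb^2) := by
  rw [mulVec_expand]
  have hq : ∀ j : Fin 2, |quadMap b x j| ≤ (1/2) * Sb b * Mb^2 := by
    intro j
    rw [abs_of_nonneg (quad_nonneg hb hx j)]
    refine le_trans (quad_le hb hx hxM j) ?_
    have := Sb_i_le hb j
    nlinarith [sq_nonneg Mb]
  calc |D i 0 * quadMap b x 0 + D i 1 * quadMap b x 1|
      ≤ |D i 0| * |quadMap b x 0| + |D i 1| * |quadMap b x 1| := by
        refine le_trans (abs_add_le _ _) ?_; rw [abs_mul, abs_mul]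
    _ ≤ (|D i 0| + |D i 1|) * ((1/2) * Sb b * Mb^2) := by
        nlinarith [hq 0, hq 1, abs_nonneg (D i 0), abs_nonneg (D i 1),
          abs_nonneg (quadMap b x 0), abs_nonneg (quadMap b x 1)]

lemma DN_lip {D : Matrix (Fin 2) (Fin 2) ℝ} {b : Fin 2 → Fin 2 → Fin 2 → ℝ}
    (hb : ∀ i j k, 0 ≤ b i j k) {Mb d : ℝ} (hMb : 0 ≤ Mb) (hd0 : 0 ≤ d) {x z : Fin 2 → ℝ}
    (hx : ∀ j, 0 ≤ x j) (hxM : ∀ j, x j ≤ Mb) (hz : ∀ j, 0 ≤ z j) (hzM : ∀ j, z j ≤ Mb)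
    (hd : ∀ j, |x j - z j| ≤ d) (i : Fin 2) :
    |D.mulVec (quadMap b x) i - D.mulVec (quadMap b z) i|
      ≤ (|D i 0| + |D i 1|) * (Sb b * Mb * d) := by
  rw [mulVec_expand, mulVec_expand]
  have hq : ∀ j : Fin 2, |quadMap b x j - quadMap b z j| ≤ Sb b * Mb * d := by
    intro j
    refine le_trans (quad_lip hb hx hxM hz hzM hd j) ?_
    exact mul_le_mul_of_nonneg_right (mul_le_mul_of_nonneg_right (Sb_i_le hb j) hMb) hd0
  have e : D i 0 * quadMap b x 0 + D i 1 * quadMap b x 1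
      - (D i 0 * quadMap b z 0 + D i 1 * quadMap b z 1)
      = D i 0 * (quadMap b x 0 - quadMap b z 0) + D i 1 * (quadMap b x 1 - quadMap b z 1) := by
    ring
  rw [e]
  calc |D i 0 * (quadMap b x 0 - quadMap b z 0) + D i 1 * (quadMap b x 1 - quadMap b z 1)|
      ≤ |D i 0| * |quadMap b x 0 - quadMap b z 0| + |D i 1| * |quadMap b x 1 - quadMap b z 1| := by
        refine le_trans (abs_add_le _ _) ?_; rw [abs_mul, abs_mul]
    _ ≤ (|D i 0| + |D i 1|) * (Sb b * Mb * d) := by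
        nlinarith [hq 0, hq 1, abs_nonneg (D i 0), abs_nonneg (D i 1),
          abs_nonneg (quadMap b x 0 - quadMap b z 0), abs_nonneg (quadMap b x 1 - quadMap b z 1)]

lemma DN_cont (D : Matrix (Fin 2) (Fin 2) ℝ) (b : Fin 2 → Fin 2 → Fin 2 → ℝ) (i : Fin 2) :
    Continuous fun v : Fin 2 → ℝ => D.mulVec (quadMap b v) i := by
  simp only [mulVec_expand]
  exact (continuous_const.mul (quad_cont b 0)).add (continuous_const.mul (quad_cont b 1))

noncomputable def Tfun (β Γβ Λ Mb : ℝ) (D Cβ : Matrix (Fin 2) (Fin 2) ℝ)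
    (b : Fin 2 → Fin 2 → Fin 2 → ℝ) (u : ℝ × ℝ → Fin 2 → ℝ) (p : ℝ × ℝ) (i : Fin 2) : ℝ :=
  Cβ.mulVec ![1, cl 1 p.2 * (cl Λ p.1) ^ (1 - β)] i -
    Γβ * (cl Λ p.1) ^ (2 * β - 1) *
      ∫ y in (0:ℝ)..1, g β y *
        (D.mulVec (quadMap b (fun j => cl Mb (u (cl Λ p.1 * (1 - y), cl 1 p.2) j))) i)

lemma Tfun_cont {β Γβ Λ Mb : ℝ} (h2 : 1/2 < β) (h1 : β ≤ 1)
    {D Cβ : Matrix (Fin 2) (Fin 2) ℝ} {b : Fin 2 → Fin 2 → Fin 2 → ℝ}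
    (hb : ∀ i j k, 0 ≤ b i j k) (hMb : 0 ≤ Mb)
    {u : ℝ × ℝ → Fin 2 → ℝ} (hu : Continuous u) (i : Fin 2) :
    Continuous fun p : ℝ × ℝ => Tfun β Γβ Λ Mb D Cβ b u p i := by
  unfold Tfun
  have hcl1 : Continuous fun p : ℝ × ℝ => cl Λ p.1 := (cl_cont Λ).comp continuous_fst
  have hcl2 : Continuous fun p : ℝ × ℝ => cl 1 p.2 := (cl_cont 1).comp continuous_snd
  apply Continuous.sub
  · simp only [mulVec_expand, Matrix.cons_val_zero, Matrix.cons_val_one, Matrix.head_cons]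
    apply Continuous.add continuous_const
    apply continuous_const.mul
    exact hcl2.mul ((Real.continuous_rpow_const (by linarith)).comp hcl1)
  · apply Continuous.mul
    · exact continuous_const.mul ((Real.continuous_rpow_const (by linarith)).comp hcl1)
    · apply intervalIntegral.continuous_of_dominated_interval
        (bound := fun y => g β y * ((|D i 0| + |D i 1|) * ((1/2) * Sb b * Mb^2)))
      · intro p
        rw [Set.uIoc_of_le (by norm_num : (0:ℝ) ≤ 1)]
        apply AEStronglyMeasurable.mul g_aesm
        apply Continuous.aestronglyMeasurable
        exact (DN_cont D b i).comp ((continuous_pi fun j =>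
          (cl_cont Mb).comp ((continuous_apply j).comp (hu.comp
            ((continuous_const.mul (continuous_const.sub continuous_id)).prodMk
              continuous_const)))))
      · intro p
        filter_upwards with t ht
        rw [Set.uIoc_of_le (by norm_num : (0:ℝ) ≤ 1)] at ht
        have hg0 : 0 ≤ g β t := g_nonneg (by linarith) (le_of_lt ht.1) ht.2
        rw [Real.norm_eq_abs, abs_mul, abs_of_nonneg hg0]
        apply mul_le_mul_of_nonneg_left _ hg0
        exact DN_bound hb hMb (fun j => cl_nonneg _ _) (fun j => cl_le hMb _) i
      · exact (g_intble h2 h1).mul_const _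
      · filter_upwards with t ht
        apply continuous_const.mul
        exact (DN_cont D b i).comp (continuous_pi fun j =>
          (cl_cont Mb).comp ((continuous_apply j).comp (hu.comp
            ((hcl1.mul continuous_const).prodMk hcl2))))


lemma core_sub_bound {β B : ℝ} (h2 : 1/2 < β) (h1 : β ≤ 1) {ha hb : ℝ → ℝ}
    (hinta : IntervalIntegrable (fun y => g β y * ha y) volume 0 1)
    (hintb : IntervalIntegrable (fun y => g β y * hb y) volume 0 1)
    (hbd : ∀ y ∈ Set.Ico (0:ℝ) 1, |ha y - hb y| ≤ B) :
    |(∫ y in (0:ℝ)..1, g β y * ha y) - ∫ y in (0:ℝ)..1, g β y * hb y| ≤ IG β * B := by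
  have heq : (fun y => g β y * ha y - g β y * hb y) = fun y => g β y * (ha y - hb y) :=
    funext fun y => by ring
  have hint : IntervalIntegrable (fun y => g β y * (ha y - hb y)) volume 0 1 := by
    rw [← heq]; exact hinta.sub hintb
  rw [← intervalIntegral.integral_sub hinta hintb]
  rw [show (∫ y in (0:ℝ)..1, (g β y * ha y - g β y * hb y))
      = ∫ y in (0:ℝ)..1, g β y * (ha y - hb y) from by rw [heq]]
  exact core_bound h2 h1 hint hbd

lemma aesm_of_contOn {h : ℝ → ℝ} (hc : ContinuousOn h (Set.Ioo 0 1)) :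
    AEStronglyMeasurable h (volume.restrict (Set.Ioc 0 1)) := by
  have h0 : AEStronglyMeasurable h (volume.restrict (Set.Ioo 0 1)) :=
    ContinuousOn.aestronglyMeasurable hc measurableSet_Ioo
  rwa [Measure.restrict_congr_set Ioo_ae_eq_Ioc] at h0

end LFS
open MeasureTheory in
open scoped NNReal in
set_option maxHeartbeats 1000000 in
theorem L_fullShur (β Γβ : ℝ) (hβ : β ∈ Set.Ioc (1/2 : ℝ) 1) (hΓ : 0 < Γβ)
    (D Cβ : Matrix (Fin 2) (Fin 2) ℝ) (hD : ∀ i j, 0 < D i j) (hC : ∀ i j, 0 < Cβ i j)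
    (b : Fin 2 → Fin 2 → Fin 2 → ℝ) (hb : ∀ i j k, 0 ≤ b i j k) :
    ∃ Λ > (0:ℝ), ∃ H : ℝ → ℝ → Fin 2 → ℝ,
      (∀ i, ContinuousOn (fun p : ℝ × ℝ => H p.1 p.2 i)
        (Set.Ioc (0:ℝ) Λ ×ˢ Set.Ioc (0:ℝ) 1)) ∧
      (∀ θ ∈ Set.Ioc (0:ℝ) Λ, ∀ l ∈ Set.Ioc (0:ℝ) 1, ∀ i, 0 ≤ H θ l i) ∧
      (∀ θ ∈ Set.Ioc (0:ℝ) Λ, ∀ l ∈ Set.Ioc (0:ℝ) 1, ∀ i,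
        H θ l i = Cβ.mulVec ![1, l * θ ^ (1 - β)] i -
          Γβ * θ ^ (2 * β - 1) * ∫ y in (0:ℝ)..1,
            β * y ^ (β - 1) * (1 - y) ^ (2 * β - 2) *
              (D.mulVec (quadMap b (H (θ * (1 - y)) l)) i)) ∧
      (∀ H' : ℝ → ℝ → Fin 2 → ℝ,
        (∀ i, ContinuousOn (fun p : ℝ × ℝ => H' p.1 p.2 i)
          (Set.Ioc (0:ℝ) Λ ×ˢ Set.Ioc (0:ℝ) 1)) →
        (∀ θ ∈ Set.Ioc (0:ℝ) Λ, ∀ l ∈ Set.Ioc (0:ℝ) 1, ∀ i, 0 ≤ H' θ l i) →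
        (∀ θ ∈ Set.Ioc (0:ℝ) Λ, ∀ l ∈ Set.Ioc (0:ℝ) 1, ∀ i,
          H' θ l i = Cβ.mulVec ![1, l * θ ^ (1 - β)] i -
            Γβ * θ ^ (2 * β - 1) * ∫ y in (0:ℝ)..1,
              β * y ^ (β - 1) * (1 - y) ^ (2 * β - 2) *
                (D.mulVec (quadMap b (H' (θ * (1 - y)) l)) i)) →
        ∀ θ ∈ Set.Ioc (0:ℝ) Λ, ∀ l ∈ Set.Ioc (0:ℝ) 1, ∀ i, H' θ l i = H θ l i) := by
  obtain ⟨hβ2, hβ1⟩ := hβ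
  have hβ0 : (0:ℝ) < β := by linarith
  have hC00 := hC 0 0; have hC01 := hC 0 1; have hC10 := hC 1 0; have hC11 := hC 1 1
  obtain ⟨Mb, hMbdef⟩ : ∃ x : ℝ, x = Cβ 0 0 + Cβ 0 1 + Cβ 1 0 + Cβ 1 1 := ⟨_, rfl⟩
  have hMb0 : 0 < Mb := by rw [hMbdef]; linarith
  obtain ⟨CD, hCDdef⟩ : ∃ x : ℝ, x = |D 0 0| + |D 0 1| + |D 1 0| + |D 1 1| := ⟨_, rfl⟩
  have hCD0 : 0 ≤ CD := by rw [hCDdef]; positivity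
  have hCDi : ∀ i : Fin 2, |D i 0| + |D i 1| ≤ CD := by
    have a0 := abs_nonneg (D 0 0); have a1 := abs_nonneg (D 0 1)
    have a2 := abs_nonneg (D 1 0); have a3 := abs_nonneg (D 1 1)
    intro i; fin_cases i <;> rw [hCDdef] <;>
      simp only [Fin.zero_eta, Fin.mk_one] <;> linarith
  obtain ⟨NB, hNBdef⟩ : ∃ x : ℝ, x = (1/2) * LFS.Sb b * Mb^2 := ⟨_, rfl⟩
  have hNB0 : 0 ≤ NB := by
    rw [hNBdef]; have := LFS.Sb_nonneg hb; positivity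
  obtain ⟨L, hLdef⟩ : ∃ x : ℝ, x = LFS.Sb b * Mb := ⟨_, rfl⟩
  have hL0 : 0 ≤ L := by rw [hLdef]; exact mul_nonneg (LFS.Sb_nonneg hb) hMb0.le
  obtain ⟨IG, hIGdef⟩ : ∃ x : ℝ, x = LFS.IG β := ⟨_, rfl⟩
  have hIG0 : 0 ≤ IG := by rw [hIGdef]; exact LFS.IG_nonneg hβ0.le
  obtain ⟨ε, hεdef⟩ : ∃ x : ℝ, x = min (min (Cβ 0 0) (Cβ 1 0)) (1/2) := ⟨_, rfl⟩
  have hε0 : 0 < ε := by rw [hεdef]; exact lt_min (lt_min hC00 hC10) (by norm_num)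
  have hεC : ∀ i : Fin 2, ε ≤ Cβ i 0 := by
    intro i; rw [hεdef]; fin_cases i
    · exact le_trans (min_le_left _ _) (min_le_left _ _)
    · exact le_trans (min_le_left _ _) (min_le_right _ _)
  have hε12 : ε ≤ 1/2 := by rw [hεdef]; exact min_le_right _ _
  have hup : ∀ i : Fin 2, Cβ i 0 + Cβ i 1 + ε ≤ Mb := by
    intro i; fin_cases i
    · show Cβ 0 0 + Cβ 0 1 + ε ≤ Mb
      rw [hMbdef]; linarith [hεC 1, hC11]
    · show Cβ 1 0 + Cβ 1 1 + ε ≤ Mb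
      rw [hMbdef]; linarith [hεC 0, hC01]
  obtain ⟨K0, hK0def⟩ : ∃ x : ℝ, x = Γβ * (IG * (CD * NB)) + Γβ * (IG * (CD * L)) + 1 := ⟨_, rfl⟩
  have hq1 : 0 ≤ Γβ * (IG * (CD * NB)) := by positivity
  have hq2 : 0 ≤ Γβ * (IG * (CD * L)) := by positivity
  have hK0pos : 0 < K0 := by rw [hK0def]; linarith
  obtain ⟨Λ, hΛdef⟩ : ∃ x : ℝ, x = min 1 ((ε / K0) ^ (1/(2*β-1))) := ⟨_, rfl⟩
  have hΛ0 : 0 < Λ := by rw [hΛdef]; exact lt_min one_pos (Real.rpow_pos_of_pos (div_pos hε0 hK0pos) _)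
  have hΛ1 : Λ ≤ 1 := by rw [hΛdef]; exact min_le_left _ _
  have hΛp0 : 0 ≤ Λ ^ (2*β-1) := Real.rpow_nonneg hΛ0.le _
  have hΛpK : Λ ^ (2*β-1) * K0 ≤ ε := by
    have h1 : Λ ^ (2*β-1) ≤ ((ε / K0) ^ (1/(2*β-1))) ^ (2*β-1) :=
      Real.rpow_le_rpow hΛ0.le (by rw [hΛdef]; exact min_le_right _ _) (by linarith)
    have h2 : ((ε / K0) ^ (1/(2*β-1))) ^ (2*β-1) = ε / K0 := by
      rw [← Real.rpow_mul (div_pos hε0 hK0pos).le]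
      rw [one_div, inv_mul_cancel₀ (ne_of_gt (show (0:ℝ) < 2*β-1 by linarith))]
      exact Real.rpow_one _
    rw [h2] at h1
    have := mul_le_mul_of_nonneg_right h1 hK0pos.le
    rwa [div_mul_cancel₀ ε (ne_of_gt hK0pos)] at this
  have hs1 : Λ ^ (2*β-1) * (Γβ * (IG * (CD * NB))) ≤ ε := by
    have : Γβ * (IG * (CD * NB)) ≤ K0 := by rw [hK0def]; linarith
    nlinarith [mul_le_mul_of_nonneg_left this hΛp0]
  have hs2 : Λ ^ (2*β-1) * (Γβ * (IG * (CD * L))) ≤ 1/2 := by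
    have : Γβ * (IG * (CD * L)) ≤ K0 := by rw [hK0def]; linarith
    nlinarith [mul_le_mul_of_nonneg_left this hΛp0]
  -- integrability and bound for the truncated operator integrand
  have hcl0 : ∀ x, 0 ≤ LFS.cl Mb x := fun x => LFS.cl_nonneg _ _
  have hclM : ∀ x, LFS.cl Mb x ≤ Mb := fun x => LFS.cl_le hMb0.le x
  have hIB : ∀ (w : ℝ × ℝ → Fin 2 → ℝ), Continuous w → ∀ (p : ℝ × ℝ) (i : Fin 2),
      IntervalIntegrable (fun y => LFS.g β y * (D.mulVec (quadMap b
        (fun j => LFS.cl Mb (w (LFS.cl Λ p.1 * (1 - y), LFS.cl 1 p.2) j))) i)) volume 0 1 ∧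
      |∫ y in (0:ℝ)..1, LFS.g β y * (D.mulVec (quadMap b
        (fun j => LFS.cl Mb (w (LFS.cl Λ p.1 * (1 - y), LFS.cl 1 p.2) j))) i)|
        ≤ IG * (CD * NB) := by
    intro w hw p i
    have hcont : Continuous fun y : ℝ => D.mulVec (quadMap b
        (fun j => LFS.cl Mb (w (LFS.cl Λ p.1 * (1 - y), LFS.cl 1 p.2) j))) i :=
      (LFS.DN_cont D b i).comp (continuous_pi fun j => (LFS.cl_cont Mb).comp
        ((continuous_apply j).comp (hw.comp
          ((continuous_const.mul (continuous_const.sub continuous_id)).prodMk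
            continuous_const))))
    have hbd : ∀ y ∈ Set.Ico (0:ℝ) 1, |D.mulVec (quadMap b
        (fun j => LFS.cl Mb (w (LFS.cl Λ p.1 * (1 - y), LFS.cl 1 p.2) j))) i| ≤ CD * NB := by
      intro y _
      refine le_trans (LFS.DN_bound hb hMb0.le (fun j => hcl0 _) (fun j => hclM _) i) ?_
      rw [hNBdef]
      refine mul_le_mul_of_nonneg_right (hCDi i) ?_
      rw [← hNBdef]; exact hNB0
    have hint := LFS.core_int hβ2 hβ1 hcont.aestronglyMeasurable hbd
    refine ⟨hint, ?_⟩
    rw [hIGdef]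
    exact LFS.core_bound hβ2 hβ1 hint hbd
  -- value bounds for the operator
  have hTbd : ∀ (w : ℝ × ℝ → Fin 2 → ℝ), Continuous w → ∀ (p : ℝ × ℝ) (i : Fin 2),
      0 ≤ LFS.Tfun β Γβ Λ Mb D Cβ b w p i ∧ LFS.Tfun β Γβ Λ Mb D Cβ b w p i ≤ Mb := by
    intro w hw p i
    obtain ⟨hint, habs⟩ := hIB w hw p i
    have hs0 : 0 ≤ LFS.cl 1 p.2 * (LFS.cl Λ p.1) ^ (1-β) :=
      mul_nonneg (LFS.cl_nonneg _ _) (Real.rpow_nonneg (LFS.cl_nonneg _ _) _)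
    have hs1' : LFS.cl 1 p.2 * (LFS.cl Λ p.1) ^ (1-β) ≤ 1 := by
      have e1 : (LFS.cl Λ p.1) ^ (1-β) ≤ 1 :=
        Real.rpow_le_one (LFS.cl_nonneg _ _) (le_trans (LFS.cl_le hΛ0.le _) hΛ1)
          (by linarith)
      have e2 : LFS.cl 1 p.2 ≤ 1 := LFS.cl_le (by norm_num) _
      nlinarith [LFS.cl_nonneg 1 p.2, Real.rpow_nonneg (LFS.cl_nonneg Λ p.1) (1-β)]
    have hclp : (LFS.cl Λ p.1) ^ (2*β-1) ≤ Λ ^ (2*β-1) :=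
      Real.rpow_le_rpow (LFS.cl_nonneg _ _) (LFS.cl_le hΛ0.le _) (by linarith)
    have hclp0 : 0 ≤ (LFS.cl Λ p.1) ^ (2*β-1) := Real.rpow_nonneg (LFS.cl_nonneg _ _) _
    have hterm : |Γβ * (LFS.cl Λ p.1) ^ (2*β-1) * ∫ y in (0:ℝ)..1, LFS.g β y *
        (D.mulVec (quadMap b (fun j => LFS.cl Mb
          (w (LFS.cl Λ p.1 * (1 - y), LFS.cl 1 p.2) j))) i)| ≤ ε := by
      rw [abs_mul, abs_mul, abs_of_nonneg hΓ.le, abs_of_nonneg hclp0]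
      have step : Γβ * (LFS.cl Λ p.1) ^ (2*β-1) *
          |∫ y in (0:ℝ)..1, LFS.g β y * (D.mulVec (quadMap b (fun j => LFS.cl Mb
            (w (LFS.cl Λ p.1 * (1 - y), LFS.cl 1 p.2) j))) i)|
          ≤ Γβ * Λ ^ (2*β-1) * (IG * (CD * NB)) := by
        have g1 : Γβ * (LFS.cl Λ p.1) ^ (2*β-1) ≤ Γβ * Λ ^ (2*β-1) :=
          mul_le_mul_of_nonneg_left hclp hΓ.le
        exact mul_le_mul g1 habs (abs_nonneg _) (by positivity)
      refine le_trans step ?_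
      calc Γβ * Λ ^ (2*β-1) * (IG * (CD * NB))
          = Λ ^ (2*β-1) * (Γβ * (IG * (CD * NB))) := by ring
        _ ≤ ε := hs1
    rw [abs_le] at hterm
    unfold LFS.Tfun
    rw [LFS.mulVec_expand]
    simp only [Matrix.cons_val_zero, Matrix.cons_val_one, Matrix.head_cons]
    constructor
    · have := hεC i
      nlinarith [hterm.2, hC i 0, hC i 1]
    · have := hup i
      nlinarith [hterm.1, hC i 0, hC i 1]
  -- the operator as a self-map of bounded continuous functions
  let Φ : BoundedContinuousFunction (ℝ × ℝ) (Fin 2 → ℝ) →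
      BoundedContinuousFunction (ℝ × ℝ) (Fin 2 → ℝ) := fun u =>
    BoundedContinuousFunction.ofNormedAddCommGroup
      (fun p i => LFS.Tfun β Γβ Λ Mb D Cβ b (⇑u) p i)
      (continuous_pi fun i => LFS.Tfun_cont hβ2 hβ1 hb hMb0.le u.continuous i) Mb
      (fun p => by
        rw [pi_norm_le_iff_of_nonneg hMb0.le]
        intro i
        rw [Real.norm_eq_abs, abs_le]
        obtain ⟨e1, e2⟩ := hTbd u u.continuous p i
        exact ⟨by linarith, e2⟩)
  have hΦcoe : ∀ (u : BoundedContinuousFunction (ℝ × ℝ) (Fin 2 → ℝ)) (p : ℝ × ℝ) (i : Fin 2),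
      Φ u p i = LFS.Tfun β Γβ Λ Mb D Cβ b (⇑u) p i := fun u p i => rfl
  -- contraction
  have hlip : LipschitzWith (1/2 : ℝ≥0) Φ := by
    apply LipschitzWith.of_dist_le_mul
    intro u v
    have hcoe : ((1/2 : ℝ≥0) : ℝ) = 1/2 := by norm_num
    rw [hcoe]
    have hd0 : (0:ℝ) ≤ 1/2 * dist u v := by positivity
    refine (BoundedContinuousFunction.dist_le hd0).mpr fun p => ?_
    refine (dist_pi_le_iff hd0).mpr fun i => ?_
    rw [Real.dist_eq, hΦcoe, hΦcoe]
    unfold LFS.Tfun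
    rw [show ∀ A B C : ℝ, (A - B) - (A - C) = -(B - C) from fun A B C => by ring]
    rw [abs_neg, ← mul_sub, abs_mul, abs_mul, abs_of_nonneg hΓ.le,
      abs_of_nonneg (Real.rpow_nonneg (LFS.cl_nonneg Λ p.1) _)]
    obtain ⟨hintu, _⟩ := hIB u u.continuous p i
    obtain ⟨hintv, _⟩ := hIB v v.continuous p i
    have hdiff : |(∫ y in (0:ℝ)..1, LFS.g β y * (D.mulVec (quadMap b (fun j => LFS.cl Mb
          (u (LFS.cl Λ p.1 * (1 - y), LFS.cl 1 p.2) j))) i)) -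
        ∫ y in (0:ℝ)..1, LFS.g β y * (D.mulVec (quadMap b (fun j => LFS.cl Mb
          (v (LFS.cl Λ p.1 * (1 - y), LFS.cl 1 p.2) j))) i)|
        ≤ IG * (CD * (L * dist u v)) := by
      rw [hIGdef]
      apply LFS.core_sub_bound hβ2 hβ1 hintu hintv
      intro y _
      set q : ℝ × ℝ := (LFS.cl Λ p.1 * (1 - y), LFS.cl 1 p.2) with hqdef
      have hdj : ∀ j : Fin 2, |LFS.cl Mb (u q j) - LFS.cl Mb (v q j)| ≤ dist u v := by
        intro j
        refine le_trans (LFS.cl_lip Mb _ _) ?_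
        have e1 : |u q j - v q j| = dist (u q j) (v q j) := (Real.dist_eq _ _).symm
        rw [e1]
        exact le_trans (dist_le_pi_dist (u q) (v q) j)
          (BoundedContinuousFunction.dist_coe_le_dist q)
      refine le_trans (LFS.DN_lip hb hMb0.le dist_nonneg
        (fun j => hcl0 _) (fun j => hclM _) (fun j => hcl0 _) (fun j => hclM _) hdj i) ?_
      rw [hLdef]
      refine mul_le_mul_of_nonneg_right (hCDi i) ?_
      rw [← hLdef]
      exact mul_nonneg hL0 dist_nonneg
    have hclp : (LFS.cl Λ p.1) ^ (2*β-1) ≤ Λ ^ (2*β-1) :=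
      Real.rpow_le_rpow (LFS.cl_nonneg _ _) (LFS.cl_le hΛ0.le _) (by linarith)
    have hclp0 : 0 ≤ (LFS.cl Λ p.1) ^ (2*β-1) := Real.rpow_nonneg (LFS.cl_nonneg _ _) _
    have step : Γβ * (LFS.cl Λ p.1) ^ (2*β-1) * |(∫ y in (0:ℝ)..1, LFS.g β y *
          (D.mulVec (quadMap b (fun j => LFS.cl Mb
            (u (LFS.cl Λ p.1 * (1 - y), LFS.cl 1 p.2) j))) i)) -
        ∫ y in (0:ℝ)..1, LFS.g β y * (D.mulVec (quadMap b (fun j => LFS.cl Mb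
          (v (LFS.cl Λ p.1 * (1 - y), LFS.cl 1 p.2) j))) i)|
        ≤ Γβ * Λ ^ (2*β-1) * (IG * (CD * (L * dist u v))) := by
      have g1 : Γβ * (LFS.cl Λ p.1) ^ (2*β-1) ≤ Γβ * Λ ^ (2*β-1) :=
        mul_le_mul_of_nonneg_left hclp hΓ.le
      exact mul_le_mul g1 hdiff (abs_nonneg _) (by positivity)
    refine le_trans step ?_
    have e : Γβ * Λ ^ (2*β-1) * (IG * (CD * (L * dist u v)))
        = (Λ ^ (2*β-1) * (Γβ * (IG * (CD * L)))) * dist u v := by ring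
    rw [e]
    exact mul_le_mul_of_nonneg_right hs2 dist_nonneg
  have hcontr : ContractingWith (1/2 : ℝ≥0) Φ :=
    ⟨by rw [← NNReal.coe_lt_coe]; norm_num, hlip⟩
  set u0 : BoundedContinuousFunction (ℝ × ℝ) (Fin 2 → ℝ) :=
    ContractingWith.fixedPoint Φ hcontr with hu0def
  have hfix : Φ u0 = u0 := hcontr.fixedPoint_isFixedPt
  have hu0 : ∀ (p : ℝ × ℝ) (i : Fin 2), u0 p i = LFS.Tfun β Γβ Λ Mb D Cβ b (⇑u0) p i := by
    intro p i
    conv_lhs => rw [← hfix]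
    exact hΦcoe u0 p i
  have hbd0 : ∀ (p : ℝ × ℝ) (i : Fin 2), 0 ≤ u0 p i ∧ u0 p i ≤ Mb := by
    intro p i
    rw [hu0 p i]
    exact hTbd u0 u0.continuous p i
  have hculled : ∀ q : ℝ × ℝ, (fun j => LFS.cl Mb (u0 q j)) = u0 q :=
    fun q => funext fun j => LFS.cl_eq (hbd0 q j).1 (hbd0 q j).2
  -- the equation in the statement's form
  have heqH : ∀ θ ∈ Set.Ioc (0:ℝ) Λ, ∀ l ∈ Set.Ioc (0:ℝ) 1, ∀ i,
      u0 (θ, l) i = Cβ.mulVec ![1, l * θ ^ (1 - β)] i -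
        Γβ * θ ^ (2 * β - 1) * ∫ y in (0:ℝ)..1,
          LFS.g β y * (D.mulVec (quadMap b (u0 (θ * (1 - y), l))) i) := by
    intro θ hθ l hl i
    rw [hu0 (θ, l) i]
    unfold LFS.Tfun
    have hclθ : LFS.cl Λ θ = θ := LFS.cl_eq hθ.1.le hθ.2
    have hcll : LFS.cl 1 l = l := LFS.cl_eq hl.1.le hl.2
    simp only [hclθ, hcll, hculled]
  refine ⟨Λ, hΛ0, fun θ l => u0 (θ, l), ?_, ?_, ?_, ?_⟩
  · intro i
    exact (((continuous_apply i).comp u0.continuous).comp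
      (continuous_fst.prodMk continuous_snd)).continuousOn
  · intro θ _ l _ i
    exact (hbd0 (θ, l) i).1
  · intro θ hθ l hl i
    exact heqH θ hθ l hl i
  · intro H' hH'c hH'0 hH'eq
    have hqmem : ∀ θ ∈ Set.Ioc (0:ℝ) Λ, ∀ y ∈ Set.Ico (0:ℝ) 1,
        θ * (1 - y) ∈ Set.Ioc (0:ℝ) Λ := by
      intro θ hθ y hy
      constructor
      · have h1 : 0 < 1 - y := by linarith [hy.2]
        exact mul_pos hθ.1 h1
      · nlinarith [hθ.1, hθ.2, hy.1, hy.2]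
    have hbase : ∀ θ ∈ Set.Ioc (0:ℝ) Λ, ∀ l ∈ Set.Ioc (0:ℝ) 1, ∀ i : Fin 2,
        Cβ.mulVec ![1, l * θ ^ (1 - β)] i = Cβ i 0 + Cβ i 1 * (l * θ ^ (1-β)) ∧
        0 ≤ l * θ ^ (1-β) ∧ l * θ ^ (1-β) ≤ 1 := by
      intro θ hθ l hl i
      refine ⟨?_, ?_, ?_⟩
      · rw [LFS.mulVec_expand]
        simp [Matrix.cons_val_zero, Matrix.cons_val_one, Matrix.head_cons]
      · exact mul_nonneg hl.1.le (Real.rpow_nonneg hθ.1.le _)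
      · have e1 : θ ^ (1-β) ≤ 1 :=
          Real.rpow_le_one hθ.1.le (le_trans hθ.2 hΛ1) (by linarith)
        nlinarith [hl.2, hl.1.le, Real.rpow_nonneg hθ.1.le (1-β)]
    have hH'eqg : ∀ θ ∈ Set.Ioc (0:ℝ) Λ, ∀ l ∈ Set.Ioc (0:ℝ) 1, ∀ i,
        H' θ l i = Cβ.mulVec ![1, l * θ ^ (1 - β)] i -
          Γβ * θ ^ (2 * β - 1) * ∫ y in (0:ℝ)..1,
            LFS.g β y * (D.mulVec (quadMap b (H' (θ * (1 - y)) l)) i) :=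
      fun θ hθ l hl i => hH'eq θ hθ l hl i
    have hH'int_nonneg : ∀ θ ∈ Set.Ioc (0:ℝ) Λ, ∀ l ∈ Set.Ioc (0:ℝ) 1, ∀ i : Fin 2,
        0 ≤ ∫ y in (0:ℝ)..1, LFS.g β y *
          (D.mulVec (quadMap b (H' (θ * (1 - y)) l)) i) := by
      intro θ hθ l hl i
      apply LFS.core_nonneg hβ2
      intro y hy
      have hmem := hqmem θ hθ y hy
      have h0 : ∀ j, 0 ≤ H' (θ * (1 - y)) l j := fun j => hH'0 _ hmem l hl j
      rw [LFS.mulVec_expand]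
      exact add_nonneg (mul_nonneg (hD i 0).le (LFS.quad_nonneg hb h0 0))
        (mul_nonneg (hD i 1).le (LFS.quad_nonneg hb h0 1))
    have hH'le : ∀ θ ∈ Set.Ioc (0:ℝ) Λ, ∀ l ∈ Set.Ioc (0:ℝ) 1, ∀ i : Fin 2,
        H' θ l i ≤ Mb := by
      intro θ hθ l hl i
      rw [hH'eqg θ hθ l hl i]
      obtain ⟨hb1, hsgn0, hsgn1⟩ := hbase θ hθ l hl i
      rw [hb1]
      have hΓθ : 0 ≤ Γβ * θ ^ (2*β-1) := mul_nonneg hΓ.le (Real.rpow_nonneg hθ.1.le _)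
      have hintn := hH'int_nonneg θ hθ l hl i
      have e1 := hup i; have e2 := hC i 0; have e3 := hC i 1
      nlinarith [mul_nonneg hΓθ hintn]
    have hNBle : ∀ i : Fin 2, (|D i 0| + |D i 1|) * ((1/2) * LFS.Sb b * Mb^2) ≤ CD * NB := by
      intro i
      rw [hNBdef]
      refine mul_le_mul_of_nonneg_right (hCDi i) ?_
      rw [← hNBdef]; exact hNB0
    have hH'intble : ∀ θ ∈ Set.Ioc (0:ℝ) Λ, ∀ l ∈ Set.Ioc (0:ℝ) 1, ∀ i : Fin 2,
        IntervalIntegrable (fun y => LFS.g β y *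
          (D.mulVec (quadMap b (H' (θ * (1 - y)) l)) i)) volume 0 1 := by
      intro θ hθ l hl i
      have haesm : AEStronglyMeasurable
          (fun y => D.mulVec (quadMap b (H' (θ * (1 - y)) l)) i)
          (volume.restrict (Set.Ioc 0 1)) := by
        apply LFS.aesm_of_contOn
        have hmapsTo : Set.MapsTo (fun y : ℝ => (θ * (1 - y), l)) (Set.Ioo 0 1)
            (Set.Ioc (0:ℝ) Λ ×ˢ Set.Ioc (0:ℝ) 1) := by
          intro y hy
          exact ⟨hqmem θ hθ y ⟨hy.1.le, hy.2⟩, hl⟩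
        have hincont : ContinuousOn (fun y : ℝ => H' (θ * (1 - y)) l) (Set.Ioo 0 1) := by
          apply continuousOn_pi.mpr
          intro j
          exact ContinuousOn.comp (hH'c j)
            (Continuous.continuousOn (by fun_prop : Continuous fun y : ℝ => (θ * (1 - y), l)))
            hmapsTo
        exact (LFS.DN_cont D b i).comp_continuousOn hincont
      apply LFS.core_int hβ2 hβ1 haesm
      intro y hy
      have hmem := hqmem θ hθ y hy
      exact le_trans (LFS.DN_bound hb hMb0.le (fun j => hH'0 _ hmem l hl j)
        (fun j => hH'le _ hmem l hl j) i) (hNBle i)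
    have hHintble : ∀ θ ∈ Set.Ioc (0:ℝ) Λ, ∀ l ∈ Set.Ioc (0:ℝ) 1, ∀ i : Fin 2,
        IntervalIntegrable (fun y => LFS.g β y *
          (D.mulVec (quadMap b (u0 (θ * (1 - y), l))) i)) volume 0 1 := by
      intro θ hθ l hl i
      have hcont : Continuous fun y : ℝ => D.mulVec (quadMap b (u0 (θ * (1 - y), l))) i :=
        (LFS.DN_cont D b i).comp (u0.continuous.comp
          (by fun_prop : Continuous fun y : ℝ => (θ * (1 - y), l)))
      apply LFS.core_int hβ2 hβ1 hcont.aestronglyMeasurable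
      intro y _
      exact le_trans (LFS.DN_bound hb hMb0.le (fun j => (hbd0 _ j).1)
        (fun j => (hbd0 _ j).2) i) (hNBle i)
    obtain ⟨Sset, hSdef⟩ : ∃ S : Set ℝ, S = {r | ∃ θ ∈ Set.Ioc (0:ℝ) Λ,
        ∃ l ∈ Set.Ioc (0:ℝ) 1, ∃ i : Fin 2, r = |H' θ l i - u0 (θ, l) i|} := ⟨_, rfl⟩
    have hSne : Sset.Nonempty := by
      rw [hSdef]
      exact ⟨|H' Λ 1 0 - u0 (Λ, 1) 0|, Λ, ⟨hΛ0, le_refl Λ⟩, 1, ⟨one_pos, le_refl 1⟩, 0, rfl⟩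
    have hSbdd : BddAbove Sset := by
      refine ⟨2 * Mb, ?_⟩
      rw [hSdef]
      rintro r ⟨θ, hθ, l, hl, i, rfl⟩
      have h1 := hH'0 θ hθ l hl i; have h2 := hH'le θ hθ l hl i
      have h3 := (hbd0 (θ, l) i).1; have h4 := (hbd0 (θ, l) i).2
      rw [abs_le]; exact ⟨by linarith, by linarith⟩
    obtain ⟨s, hs⟩ : ∃ s : ℝ, s = sSup Sset := ⟨_, rfl⟩
    have hsmem : ∀ θ ∈ Set.Ioc (0:ℝ) Λ, ∀ l ∈ Set.Ioc (0:ℝ) 1, ∀ i : Fin 2,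
        |H' θ l i - u0 (θ, l) i| ≤ s := by
      intro θ hθ l hl i
      rw [hs]
      exact le_csSup hSbdd (by rw [hSdef]; exact ⟨θ, hθ, l, hl, i, rfl⟩)
    have hs0 : 0 ≤ s :=
      le_trans (abs_nonneg _) (hsmem Λ ⟨hΛ0, le_refl _⟩ 1 ⟨one_pos, le_refl _⟩ 0)
    have hkey : ∀ r ∈ Sset, r ≤ 1/2 * s := by
      rw [hSdef]
      rintro r ⟨θ, hθ, l, hl, i, rfl⟩
      rw [hH'eqg θ hθ l hl i, heqH θ hθ l hl i]
      rw [show ∀ A B C : ℝ, (A - B) - (A - C) = -(B - C) from fun A B C => by ring,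
        abs_neg, ← mul_sub, abs_mul]
      rw [abs_of_nonneg (mul_nonneg hΓ.le (Real.rpow_nonneg hθ.1.le _))]
      have hdiff : |(∫ y in (0:ℝ)..1, LFS.g β y *
            (D.mulVec (quadMap b (H' (θ * (1 - y)) l)) i)) -
          ∫ y in (0:ℝ)..1, LFS.g β y *
            (D.mulVec (quadMap b (u0 (θ * (1 - y), l))) i)|
          ≤ IG * (CD * (L * s)) := by
        rw [hIGdef]
        apply LFS.core_sub_bound hβ2 hβ1 (hH'intble θ hθ l hl i) (hHintble θ hθ l hl i)
        intro y hy
        have hmem := hqmem θ hθ y hy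
        have hdj : ∀ j : Fin 2, |H' (θ * (1 - y)) l j - u0 (θ * (1 - y), l) j| ≤ s :=
          fun j => hsmem _ hmem l hl j
        refine le_trans (LFS.DN_lip hb hMb0.le hs0 (fun j => hH'0 _ hmem l hl j)
          (fun j => hH'le _ hmem l hl j) (fun j => (hbd0 _ j).1)
          (fun j => (hbd0 _ j).2) hdj i) ?_
        rw [hLdef]
        refine mul_le_mul_of_nonneg_right (hCDi i) ?_
        rw [← hLdef]
        exact mul_nonneg hL0 hs0
      have hθp : θ ^ (2*β-1) ≤ Λ ^ (2*β-1) :=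
        Real.rpow_le_rpow hθ.1.le hθ.2 (by linarith)
      have step : Γβ * θ ^ (2*β-1) * |(∫ y in (0:ℝ)..1, LFS.g β y *
            (D.mulVec (quadMap b (H' (θ * (1 - y)) l)) i)) -
          ∫ y in (0:ℝ)..1, LFS.g β y *
            (D.mulVec (quadMap b (u0 (θ * (1 - y), l))) i)|
          ≤ Γβ * Λ ^ (2*β-1) * (IG * (CD * (L * s))) := by
        have g1 : Γβ * θ ^ (2*β-1) ≤ Γβ * Λ ^ (2*β-1) :=
          mul_le_mul_of_nonneg_left hθp hΓ.le
        exact mul_le_mul g1 hdiff (abs_nonneg _)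
          (mul_nonneg hΓ.le (Real.rpow_nonneg hΛ0.le _))
      refine le_trans step ?_
      have e : Γβ * Λ ^ (2*β-1) * (IG * (CD * (L * s)))
          = (Λ ^ (2*β-1) * (Γβ * (IG * (CD * L)))) * s := by ring
      rw [e]
      exact mul_le_mul_of_nonneg_right hs2 hs0
    have hss : s ≤ 1/2 * s := by rw [hs]; exact csSup_le hSne (by rw [← hs]; exact hkey)
    intro θ hθ l hl i
    have h1 := hsmem θ hθ l hl i
    have h2 : |H' θ l i - u0 (θ, l) i| = 0 :=
      le_antisymm (by linarith) (abs_nonneg _)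
    have h3 : H' θ l i - u0 (θ, l) i = 0 := abs_eq_zero.mp h2
    show H' θ l i = u0 (θ, l) i
    linarith
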